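/- Let q>2 be real and set a(x) = ((q−1)e^x − e^{2x})/(e^x+q−1)³ for x≥0. Let r∈ℝ and b>0, let φ∈C²([b,∞)) be nonnegative, and assume that w↦w·φ'(w) is nonnegative and nondecreasing on [b,∞) with w·φ'(w)→∞ as w→∞. Define Φ(t) = ∫_{bt}^{∞} x^r · e^{−φ(x/t)} · a(x) dx for t>0. Then there is exactly one t_0∈(0,∞) such that Φ(t_0)=0. -/

import Mathlib

open MeasureTheory Filter Topology Set

/-- `a(x) = ((q−1)e^x − e^{2x})/(e^x+q−1)³`. -/
noncomputable def afun (q : ℝ) (x : ℝ) : ℝ :=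
  ((q - 1) * Real.exp x - Real.exp (2 * x)) / (Real.exp x + q - 1) ^ 3

lemma base_pos {q : ℝ} (hq : 2 < q) (x : ℝ) : 0 < Real.exp x + q - 1 := by
  have := Real.exp_pos x; linarith

lemma denom_pos {q : ℝ} (hq : 2 < q) (x : ℝ) : 0 < (Real.exp x + q - 1) ^ 3 :=
  pow_pos (base_pos hq x) 3

lemma afun_eq (q x : ℝ) :
    afun q x = (Real.exp x * ((q - 1) - Real.exp x)) / (Real.exp x + q - 1) ^ 3 := by
  rw [afun, two_mul, Real.exp_add]; ring_nf

lemma afun_pos {q x : ℝ} (hq : 2 < q) (hx : x < Real.log (q - 1)) : 0 < afun q x := by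
  rw [afun_eq]
  have h1 : Real.exp x < q - 1 := by
    have := Real.exp_lt_exp.2 hx
    rwa [Real.exp_log (by linarith)] at this
  exact div_pos (mul_pos (Real.exp_pos x) (by linarith)) (denom_pos hq x)

lemma afun_neg {q x : ℝ} (hq : 2 < q) (hx : Real.log (q - 1) < x) : afun q x < 0 := by
  rw [afun_eq]
  have h1 : q - 1 < Real.exp x := by
    have := Real.exp_lt_exp.2 hx
    rwa [Real.exp_log (by linarith)] at this
  apply div_neg_of_neg_of_pos _ (denom_pos hq x)
  have := Real.exp_pos x
  nlinarith

lemma afun_nonneg {q x : ℝ} (hq : 2 < q) (hx : x ≤ Real.log (q - 1)) : 0 ≤ afun q x := by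
  rw [afun_eq]
  have h1 : Real.exp x ≤ q - 1 := by
    have := Real.exp_le_exp.2 hx
    rwa [Real.exp_log (by linarith)] at this
  exact div_nonneg (mul_nonneg (Real.exp_pos x).le (by linarith)) (denom_pos hq x).le

lemma afun_nonpos {q x : ℝ} (hq : 2 < q) (hx : Real.log (q - 1) ≤ x) : afun q x ≤ 0 := by
  rcases eq_or_lt_of_le hx with h | h
  · rw [afun_eq, ← h, Real.exp_log (by linarith)]
    simp
  · exact (afun_neg hq h).le

lemma abs_afun_le {q x : ℝ} (hq : 2 < q) (hx : 0 ≤ x) : |afun q x| ≤ q * Real.exp (-x) := by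
  rw [afun]
  have hd := denom_pos hq x
  have he := Real.exp_pos x
  rw [abs_div, abs_of_pos hd, div_le_iff₀ hd]
  have h2 : |(q - 1) * Real.exp x - Real.exp (2 * x)| ≤ (q - 1) * Real.exp x + Real.exp (2 * x) := by
    have := Real.exp_pos (2 * x)
    rw [abs_sub_le_iff]; constructor <;> nlinarith
  refine h2.trans ?_
  have h3 : Real.exp x ^ 3 ≤ (Real.exp x + q - 1) ^ 3 :=
    pow_le_pow_left₀ he.le (by linarith) 3
  have e1 : q * Real.exp (-x) * Real.exp x ^ 3 = q * Real.exp x ^ 2 := by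
    rw [Real.exp_neg]
    field_simp
  have e2 : (1:ℝ) ≤ Real.exp x := Real.one_le_exp hx
  have h4 : (q - 1) * Real.exp x + Real.exp (2 * x) ≤ q * Real.exp (-x) * Real.exp x ^ 3 := by
    rw [e1, two_mul, Real.exp_add]
    nlinarith [mul_nonneg (show (0:ℝ) ≤ q - 1 by linarith)
      (mul_nonneg he.le (show (0:ℝ) ≤ Real.exp x - 1 by linarith))]
  refine h4.trans ?_
  have hqe : (0:ℝ) < q * Real.exp (-x) := by positivity
  nlinarith

lemma continuous_afun {q : ℝ} (hq : 2 < q) : Continuous (afun q) := by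
  apply Continuous.div (by continuity) (by continuity)
  intro x; exact ne_of_gt (denom_pos hq x)

lemma continuousOn_rpow_exp (r c : ℝ) (hc : 0 < c) :
    ContinuousOn (fun x : ℝ => x ^ r * Real.exp (-x)) (Ici c) := by
  apply ContinuousOn.mul
  · exact ContinuousOn.rpow_const continuousOn_id
      (fun x hx => Or.inl (ne_of_gt (lt_of_lt_of_le hc hx)))
  · exact (Real.continuous_exp.comp continuous_neg).continuousOn

lemma integrableOn_rpow_exp (r c : ℝ) (hc : 0 < c) :
    IntegrableOn (fun x : ℝ => x ^ r * Real.exp (-x)) (Ioi c) := by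
  have htend : Tendsto (fun x : ℝ => x ^ r * Real.exp (-(1/2) * x)) atTop (𝓝 0) :=
    tendsto_rpow_mul_exp_neg_mul_atTop_nhds_zero r (1/2) (by norm_num)
  have h1 : ∀ᶠ x : ℝ in atTop, |x ^ r * Real.exp (-(1/2) * x)| < 1 := by
    have := htend.abs
    simp only [abs_zero] at this
    exact this.eventually (eventually_lt_nhds one_pos)
  obtain ⟨N, hN⟩ := eventually_atTop.1 h1
  have hcont2 : ContinuousOn (fun x : ℝ => x ^ r * Real.exp (-(1/2) * x)) (Icc c N) := by
    apply ContinuousOn.mul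
    · exact ContinuousOn.rpow_const continuousOn_id
        (fun x hx => Or.inl (ne_of_gt (lt_of_lt_of_le hc hx.1)))
    · exact (Real.continuous_exp.comp (by continuity)).continuousOn
  obtain ⟨C0, hC0⟩ := (isCompact_Icc (a := c) (b := N)).exists_bound_of_continuousOn hcont2
  set C := max C0 1 with hC
  have hbound : ∀ x ∈ Ioi c, ‖x ^ r * Real.exp (-x)‖ ≤ C * Real.exp (-(1/2) * x) := by
    intro x hx
    have hxpos : 0 < x := hc.trans hx
    have edec : Real.exp (-x) = Real.exp (-(1/2) * x) * Real.exp (-(1/2) * x) := by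
      rw [← Real.exp_add]; ring_nf
    have key : |x ^ r * Real.exp (-(1/2) * x)| ≤ C := by
      rcases le_total x N with h | h
      · exact le_trans (hC0 x ⟨le_of_lt hx, h⟩) (le_max_left _ _)
      · exact le_trans (hN x h).le (le_max_right _ _)
    have : ‖x ^ r * Real.exp (-x)‖ = |x ^ r * Real.exp (-(1/2) * x)| * Real.exp (-(1/2) * x) := by
      rw [Real.norm_eq_abs, edec, ← mul_assoc, abs_mul,
        abs_of_pos (Real.exp_pos _)]
    rw [this]
    exact mul_le_mul_of_nonneg_right key (Real.exp_pos _).le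
  have hg : IntegrableOn (fun x : ℝ => C * Real.exp (-(1/2) * x)) (Ioi c) :=
    (exp_neg_integrableOn_Ioi c (by norm_num : (0:ℝ) < 1/2)).const_mul C
  refine Integrable.mono' hg ?_ ?_
  · exact ((continuousOn_rpow_exp r c hc).mono Ioi_subset_Ici_self).aestronglyMeasurable
      measurableSet_Ioi
  · exact (ae_restrict_iff' measurableSet_Ioi).2 (Eventually.of_forall hbound)

/-- generic monotonicity helper -/
lemma monoAux {f f' : ℝ → ℝ} {c : ℝ} (hcont : ContinuousOn f (Ici c))
    (hderiv : ∀ x ∈ Ioi c, HasDerivAt f (f' x) x)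
    (h0 : ∀ x ∈ Ioi c, 0 ≤ f' x) : MonotoneOn f (Ici c) := by
  apply monotoneOn_of_deriv_nonneg (convex_Ici c) hcont
  · rw [interior_Ici]
    exact fun x hx => (hderiv x hx).differentiableAt.differentiableWithinAt
  · rw [interior_Ici]
    intro x hx
    rw [(hderiv x hx).deriv]
    exact h0 x hx

section phi
variable {b : ℝ} (hb : 0 < b) {φ : ℝ → ℝ} (hφC2 : ContDiffOn ℝ 2 φ (Ici b))
include hb hφC2

lemma phi_hasDeriv {w : ℝ} (hw : b < w) : HasDerivAt φ (deriv φ w) w := by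
  have h1 : DifferentiableOn ℝ φ (Ici b) := hφC2.differentiableOn (by norm_num)
  exact ((h1 w (le_of_lt hw)).differentiableAt (Ici_mem_nhds hw)).hasDerivAt

lemma phi_mono (hψnn : ∀ w ∈ Ici b, 0 ≤ w * deriv φ w) : MonotoneOn φ (Ici b) := by
  apply monoAux hφC2.continuousOn (fun x hx => phi_hasDeriv hb hφC2 hx)
  intro x hx
  have hxpos : 0 < x := hb.trans hx
  have := hψnn x (mem_Ici.2 (le_of_lt hx))
  exact nonneg_of_mul_nonneg_right this hxpos

end phi

section phi2
variable {b : ℝ} (hb : 0 < b) {φ : ℝ → ℝ} (hφC2 : ContDiffOn ℝ 2 φ (Ici b))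
include hb hφC2

lemma scaled_hasDeriv {t x : ℝ} (ht : 0 < t) (hx : b * t < x) :
    HasDerivAt (fun y => φ (y / t)) (deriv φ (x / t) / t) x := by
  have h1 : b < x / t := (lt_div_iff₀ ht).2 hx
  have h2 := (phi_hasDeriv hb hφC2 h1).comp x ((hasDerivAt_id x).div_const t)
  simpa [div_eq_mul_inv, Function.comp_def] using h2

lemma scaled_contOn {t : ℝ} (ht : 0 < t) :
    ContinuousOn (fun y => φ (y / t)) (Ici (b * t)) := by
  apply hφC2.continuousOn.comp (continuousOn_id.div_const t)
  intro x hx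
  simp only [id]
  exact (le_div_iff₀ ht).2 hx

lemma phi_diff_mono (hψmono : MonotoneOn (fun w => w * deriv φ w) (Ici b))
    {t1 t2 : ℝ} (ht1 : 0 < t1) (ht12 : t1 < t2) :
    MonotoneOn (fun x => φ (x / t1) - φ (x / t2)) (Ici (b * t2)) := by
  have ht2 : 0 < t2 := ht1.trans ht12
  have hsub : Ici (b * t2) ⊆ Ici (b * t1) := by
    apply Ici_subset_Ici.2
    exact mul_le_mul_of_nonneg_left ht12.le hb.le
  apply monoAux (f' := fun x => deriv φ (x / t1) / t1 - deriv φ (x / t2) / t2)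
  · exact ((scaled_contOn hb hφC2 ht1).mono hsub).sub (scaled_contOn hb hφC2 ht2)
  · intro x hx
    have hx' : b * t2 < x := hx
    have hx1 : b * t1 < x :=
      lt_of_le_of_lt (mul_le_mul_of_nonneg_left ht12.le hb.le) hx'
    exact (scaled_hasDeriv hb hφC2 ht1 hx1).sub (scaled_hasDeriv hb hφC2 ht2 hx')
  · intro x hx
    have hx' : b * t2 < x := hx
    have hxpos : 0 < x := by nlinarith
    have hm1 : b ≤ x / t2 := (le_div_iff₀ ht2).2 hx'.le
    have hm2 : b ≤ x / t1 := le_trans hm1 (by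
      apply div_le_div_of_nonneg_left hxpos.le ht1 ht12.le)
    have hle : x / t2 ≤ x / t1 := div_le_div_of_nonneg_left hxpos.le ht1 ht12.le
    have hmono : x / t2 * deriv φ (x / t2) ≤ x / t1 * deriv φ (x / t1) := hψmono hm1 hm2 hle
    have e1 : x / t1 * deriv φ (x / t1) = x * (deriv φ (x / t1) / t1) := by ring
    have e2 : x / t2 * deriv φ (x / t2) = x * (deriv φ (x / t2) / t2) := by ring
    rw [e1, e2] at hmono
    have := (mul_le_mul_iff_right₀ hxpos).1 hmono
    linarith

lemma phi_log_lower (hψmono : MonotoneOn (fun w => w * deriv φ w) (Ici b))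
    {t x0 y : ℝ} (ht : 0 < t) (hbt : b * t ≤ x0) (hx0 : 0 < x0) (hy : x0 ≤ y) :
    φ (x0 / t) + (x0 / t * deriv φ (x0 / t)) * (Real.log y - Real.log x0) ≤ φ (y / t) := by
  set M := x0 / t * deriv φ (x0 / t) with hM
  have key : MonotoneOn (fun y => φ (y / t) - M * Real.log y) (Ici x0) := by
    apply monoAux (f' := fun y => deriv φ (y / t) / t - M / y)
    · apply ContinuousOn.sub
      · exact (scaled_contOn hb hφC2 ht).mono (Ici_subset_Ici.2 hbt)
      · exact (Real.continuousOn_log.mono (fun z hz => ne_of_gt (lt_of_lt_of_le hx0 hz))).const_smul M |>.congr (fun z hz => by simp [smul_eq_mul])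
    · intro y hy'
      have h1 : b * t < y := lt_of_le_of_lt hbt hy'
      exact (scaled_hasDeriv hb hφC2 ht h1).sub
        ((Real.hasDerivAt_log (ne_of_gt (hx0.trans hy'))).const_mul M)
    · intro y hy'
      have hypos : 0 < y := hx0.trans hy'
      have hm1 : b ≤ x0 / t := (le_div_iff₀ ht).2 hbt
      have hy'' : x0 < y := hy'
      have hle : x0 / t ≤ y / t := by gcongr
      have hm2 : b ≤ y / t := le_trans hm1 hle
      have hmono : x0 / t * deriv φ (x0 / t) ≤ y / t * deriv φ (y / t) := hψmono hm1 hm2 hle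
      have e1 : y / t * deriv φ (y / t) = deriv φ (y / t) / t * y := by ring
      rw [e1] at hmono
      have : M / y ≤ deriv φ (y / t) / t := (div_le_iff₀ hypos).2 hmono
      linarith
  have := key (self_mem_Ici) (mem_Ici.2 hy) hy
  simp only at this
  linarith
end phi2

noncomputable def Ffun (q r : ℝ) (φ : ℝ → ℝ) (t x : ℝ) : ℝ :=
  x ^ r * Real.exp (-(φ (x / t))) * afun q x

section Fsec
variable {q r b : ℝ} {φ : ℝ → ℝ} (hq : 2 < q) (hb : 0 < b)
  (hφC2 : ContDiffOn ℝ 2 φ (Ici b)) (hφnn : ∀ w ∈ Ici b, 0 ≤ φ w)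
include hq hb hφC2

lemma Ffun_contOn {t : ℝ} (ht : 0 < t) : ContinuousOn (Ffun q r φ t) (Ioi (b * t)) := by
  have hbt : 0 < b * t := mul_pos hb ht
  apply ContinuousOn.mul
  apply ContinuousOn.mul
  · exact ContinuousOn.rpow_const continuousOn_id
      (fun x hx => Or.inl (ne_of_gt (hbt.trans hx)))
  · exact (Real.continuous_exp.comp continuous_neg).comp_continuousOn
      ((scaled_contOn hb hφC2 ht).mono Ioi_subset_Ici_self)
  · exact (continuous_afun hq).continuousOn

include hφnn

lemma Ffun_bound {t x : ℝ} (ht : 0 < t) (hx : b * t < x) :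
    ‖Ffun q r φ t x‖ ≤ q * (x ^ r * Real.exp (-x)) := by
  have hbt : 0 < b * t := mul_pos hb ht
  have hxpos : 0 < x := hbt.trans hx
  have hmem : x / t ∈ Ici b := mem_Ici.2 ((le_div_iff₀ ht).2 hx.le)
  have h1 : Real.exp (-(φ (x / t))) ≤ 1 := by
    rw [Real.exp_le_one_iff]
    simpa using hφnn _ hmem
  have h2 := abs_afun_le hq hxpos.le
  rw [Ffun, norm_mul, norm_mul, Real.norm_eq_abs, Real.norm_eq_abs, Real.norm_eq_abs,
    abs_of_pos (Real.rpow_pos_of_pos hxpos r), abs_of_pos (Real.exp_pos _)]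
  calc x ^ r * Real.exp (-(φ (x / t))) * |afun q x|
      ≤ x ^ r * 1 * (q * Real.exp (-x)) := by
        apply mul_le_mul _ h2 (abs_nonneg _)
        · positivity
        · exact mul_le_mul_of_nonneg_left h1 (Real.rpow_pos_of_pos hxpos r).le
    _ = q * (x ^ r * Real.exp (-x)) := by ring

lemma Ffun_integrableOn {t : ℝ} (ht : 0 < t) :
    IntegrableOn (Ffun q r φ t) (Ioi (b * t)) := by
  have hbt : 0 < b * t := mul_pos hb ht
  refine Integrable.mono' (((integrableOn_rpow_exp r (b * t) hbt)).const_mul q) ?_ ?_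
  · exact (Ffun_contOn hq hb hφC2 ht).aestronglyMeasurable measurableSet_Ioi
  · exact (ae_restrict_iff' measurableSet_Ioi).2
      (Eventually.of_forall (fun x hx => Ffun_bound hq hb hφC2 hφnn ht hx))

lemma Ffun_int_neg {t : ℝ} (ht : 0 < t) (hx0 : Real.log (q - 1) ≤ b * t) :
    (∫ x in Ioi (b * t), Ffun q r φ t x) < 0 := by
  have hbt : 0 < b * t := mul_pos hb ht
  have key : 0 < ∫ x in Ioi (b * t), -Ffun q r φ t x := by
    rw [setIntegral_pos_iff_support_of_nonneg_ae]
    · have hsupp : Ioi (b * t) ⊆ (Function.support fun x => -Ffun q r φ t x) := by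
        intro x hx
        have hxpos : 0 < x := hbt.trans hx
        have hane : afun q x < 0 := afun_neg hq (lt_of_le_of_lt hx0 hx)
        have h1 : 0 < x ^ r := Real.rpow_pos_of_pos hxpos r
        have h2 := Real.exp_pos (-(φ (x / t)))
        simp only [Function.mem_support, Ffun, neg_ne_zero]
        exact mul_ne_zero (mul_ne_zero h1.ne' h2.ne') hane.ne
      calc (0:ENNReal) < volume (Ioi (b * t)) := by rw [Real.volume_Ioi]; exact ENNReal.zero_lt_top
        _ ≤ volume ((Function.support fun x => -Ffun q r φ t x) ∩ Ioi (b * t)) :=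
            measure_mono (subset_inter hsupp subset_rfl)
    · apply (ae_restrict_iff' measurableSet_Ioi).2
      apply Eventually.of_forall
      intro x hx
      have : afun q x ≤ 0 := afun_nonpos hq (hx0.trans (le_of_lt hx))
      have hxpos : 0 < x := hbt.trans hx
      simp only [Ffun, Pi.zero_apply, neg_nonneg]
      apply mul_nonpos_of_nonneg_of_nonpos _ this
      positivity
    · exact ((Ffun_integrableOn hq hb hφC2 hφnn ht).neg)
  have := key
  rw [integral_neg] at this
  linarith

end Fsec

section Cross
variable {q r b : ℝ} {φ : ℝ → ℝ} (hq : 2 < q) (hb : 0 < b)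
  (hφC2 : ContDiffOn ℝ 2 φ (Ici b)) (hφnn : ∀ w ∈ Ici b, 0 ≤ φ w)
include hq hb hφC2 hφnn

lemma Ffun_int_pos_Ioc {t u v : ℝ} (ht : 0 < t) (h1 : b * t ≤ u) (huv : u < v)
    (hv : v ≤ Real.log (q - 1)) :
    0 < ∫ x in Ioc u v, Ffun q r φ t x := by
  have hbt : 0 < b * t := mul_pos hb ht
  have hupos : 0 < u := lt_of_lt_of_le hbt h1
  have hsub : Ioc u v ⊆ Ioi (b * t) := fun x hx => lt_of_le_of_lt h1 hx.1
  rw [setIntegral_pos_iff_support_of_nonneg_ae]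
  · have hsupp : Ioo u v ⊆ (Function.support (Ffun q r φ t)) ∩ Ioc u v := by
      intro x hx
      refine ⟨?_, hx.1, hx.2.le⟩
      have hxpos : 0 < x := hupos.trans hx.1
      have hapos : 0 < afun q x := afun_pos hq (lt_of_lt_of_le hx.2 hv)
      have h1' : 0 < x ^ r := Real.rpow_pos_of_pos hxpos r
      have h2' := Real.exp_pos (-(φ (x / t)))
      simp only [Function.mem_support, Ffun]
      exact mul_ne_zero (mul_ne_zero h1'.ne' h2'.ne') hapos.ne'
    calc (0:ENNReal) < volume (Ioo u v) := by
          rw [Real.volume_Ioo]; exact ENNReal.ofReal_pos.2 (by linarith)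
      _ ≤ _ := measure_mono hsupp
  · apply (ae_restrict_iff' measurableSet_Ioc).2
    apply Eventually.of_forall
    intro x hx
    have hxpos : 0 < x := hupos.trans hx.1
    have hann : 0 ≤ afun q x := afun_nonneg hq (hx.2.trans hv)
    have h1' : 0 < x ^ r := Real.rpow_pos_of_pos hxpos r
    have h2' := Real.exp_pos (-(φ (x / t)))
    simp only [Ffun, Pi.zero_apply]
    positivity
  · exact (Ffun_integrableOn hq hb hφC2 hφnn ht).mono_set hsub

lemma crossing (hψmono : MonotoneOn (fun w => w * deriv φ w) (Ici b))
    {t1 t2 : ℝ} (ht1 : 0 < t1) (h12 : t1 < t2)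
    (hneg : (∫ x in Ioi (b * t1), Ffun q r φ t1 x) ≤ 0) :
    (∫ x in Ioi (b * t2), Ffun q r φ t2 x) < 0 := by
  have ht2 : 0 < t2 := ht1.trans h12
  set x0 := Real.log (q - 1) with hx0def
  by_cases hcase : x0 ≤ b * t2
  · exact Ffun_int_neg hq hb hφC2 hφnn ht2 hcase
  push_neg at hcase
  have hbt1 : 0 < b * t1 := mul_pos hb ht1
  have hbt2 : 0 < b * t2 := mul_pos hb ht2
  have hbb : b * t1 < b * t2 := by nlinarith
  set D := fun x => φ (x / t1) - φ (x / t2) with hD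
  set K := Real.exp (D x0) with hK
  have hKpos : 0 < K := Real.exp_pos _
  have hDmono := phi_diff_mono hb hφC2 hψmono ht1 h12
  -- Step 1: pointwise bound
  have hpt : ∀ x ∈ Ioi (b * t2), Ffun q r φ t2 x ≤ K * Ffun q r φ t1 x := by
    intro x hx
    have hx' : b * t2 < x := hx
    have hxpos : 0 < x := hbt2.trans hx'
    have he : Real.exp (-(φ (x / t2))) = Real.exp (-(φ (x / t1))) * Real.exp (D x) := by
      rw [← Real.exp_add]; congr 1; simp only [hD]; ring
    have hF2 : Ffun q r φ t2 x = Ffun q r φ t1 x * Real.exp (D x) := by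
      simp only [Ffun, he]; ring
    rw [hF2]
    rcases le_total x x0 with hle | hle
    · have hDle : D x ≤ D x0 := hDmono (mem_Ici.2 hx'.le) (mem_Ici.2 hcase.le) hle
      have hFnn : 0 ≤ Ffun q r φ t1 x := by
        have := afun_nonneg hq hle
        have h1' : 0 < x ^ r := Real.rpow_pos_of_pos hxpos r
        have h2' := Real.exp_pos (-(φ (x / t1)))
        simp only [Ffun]; positivity
      calc Ffun q r φ t1 x * Real.exp (D x) ≤ Ffun q r φ t1 x * K :=
            mul_le_mul_of_nonneg_left (Real.exp_le_exp.2 hDle) hFnn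
        _ = K * Ffun q r φ t1 x := mul_comm _ _
    · have hDge : D x0 ≤ D x := hDmono (mem_Ici.2 hcase.le) (mem_Ici.2 hx'.le) hle
      have hFnp : Ffun q r φ t1 x ≤ 0 := by
        have ha := afun_nonpos hq hle
        have h1' : 0 < x ^ r := Real.rpow_pos_of_pos hxpos r
        have h2' := Real.exp_pos (-(φ (x / t1)))
        simp only [Ffun]
        apply mul_nonpos_of_nonneg_of_nonpos _ ha
        positivity
      calc Ffun q r φ t1 x * Real.exp (D x) ≤ Ffun q r φ t1 x * K := by
            apply mul_le_mul_of_nonpos_left (Real.exp_le_exp.2 hDge) hFnp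
        _ = K * Ffun q r φ t1 x := mul_comm _ _
  -- integrability
  have hsub21 : Ioi (b * t2) ⊆ Ioi (b * t1) := Ioi_subset_Ioi hbb.le
  have hint1 : IntegrableOn (Ffun q r φ t1) (Ioi (b * t2)) :=
    (Ffun_integrableOn hq hb hφC2 hφnn ht1).mono_set hsub21
  have hint2 : IntegrableOn (Ffun q r φ t2) (Ioi (b * t2)) :=
    Ffun_integrableOn hq hb hφC2 hφnn ht2
  -- Step 2
  have hstep2 : (∫ x in Ioi (b * t2), Ffun q r φ t2 x)
      ≤ K * ∫ x in Ioi (b * t2), Ffun q r φ t1 x := by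
    rw [← integral_const_mul]
    exact setIntegral_mono_on hint2 (hint1.const_mul K) measurableSet_Ioi hpt
  -- Step 3
  have hsplit : (∫ x in Ioi (b * t1), Ffun q r φ t1 x)
      = (∫ x in Ioc (b * t1) (b * t2), Ffun q r φ t1 x)
        + ∫ x in Ioi (b * t2), Ffun q r φ t1 x := by
    rw [← setIntegral_union]
    · rw [Ioc_union_Ioi_eq_Ioi hbb.le]
    · exact Ioc_disjoint_Ioi le_rfl
    · exact measurableSet_Ioi
    · exact (Ffun_integrableOn hq hb hφC2 hφnn ht1).mono_set Ioc_subset_Ioi_self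
    · exact hint1
  have hpos : 0 < ∫ x in Ioc (b * t1) (b * t2), Ffun q r φ t1 x :=
    Ffun_int_pos_Ioc hq hb hφC2 hφnn ht1 le_rfl hbb hcase.le
  have hneg2 : (∫ x in Ioi (b * t2), Ffun q r φ t1 x) < 0 := by linarith
  calc (∫ x in Ioi (b * t2), Ffun q r φ t2 x) ≤ K * ∫ x in Ioi (b * t2), Ffun q r φ t1 x := hstep2
    _ < 0 := mul_neg_of_pos_of_neg hKpos hneg2

end Cross

section Jsec
variable {r x0 : ℝ}

noncomputable def gfun (r x0 M x : ℝ) : ℝ := x ^ r * Real.exp (-x) * (x / x0) ^ (-M)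

lemma gfun_contOn (hx0 : 0 < x0) (M : ℝ) : ContinuousOn (gfun r x0 M) (Ioi x0) := by
  apply ContinuousOn.mul
  · exact (continuousOn_rpow_exp r x0 hx0).mono Ioi_subset_Ici_self
  · apply ContinuousOn.rpow_const (continuousOn_id.div_const x0)
    intro x hx
    have : 0 < x / x0 := div_pos (hx0.trans hx) hx0
    exact Or.inl this.ne'

lemma gfun_bound (hx0 : 0 < x0) {M : ℝ} (hM : 0 ≤ M) {x : ℝ} (hx : x ∈ Ioi x0) :
    ‖gfun r x0 M x‖ ≤ x ^ r * Real.exp (-x) := by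
  have hxpos : 0 < x := hx0.trans hx
  have hdiv : 1 ≤ x / x0 := (one_le_div hx0).2 (le_of_lt hx)
  have h1 : (x / x0) ^ (-M) ≤ 1 := Real.rpow_le_one_of_one_le_of_nonpos hdiv (by linarith)
  have h2 : 0 < (x / x0) ^ (-M) := Real.rpow_pos_of_pos (by linarith) _
  rw [gfun, norm_mul, Real.norm_eq_abs, Real.norm_eq_abs,
    abs_of_pos h2, abs_of_pos (by positivity : (0:ℝ) < x ^ r * Real.exp (-x))]
  nth_rewrite 2 [← mul_one (x ^ r * Real.exp (-x))]
  apply mul_le_mul_of_nonneg_left h1 (by positivity)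

lemma gfun_integrableOn (hx0 : 0 < x0) {M : ℝ} (hM : 0 ≤ M) :
    IntegrableOn (gfun r x0 M) (Ioi x0) := by
  refine Integrable.mono' (integrableOn_rpow_exp r x0 hx0) ?_ ?_
  · exact (gfun_contOn hx0 M).aestronglyMeasurable measurableSet_Ioi
  · exact (ae_restrict_iff' measurableSet_Ioi).2
      (Eventually.of_forall (fun x hx => gfun_bound hx0 hM hx))

lemma gfun_int_mono (hx0 : 0 < x0) {M0 M : ℝ} (hM0 : 0 ≤ M0) (hMM : M0 ≤ M) :
    (∫ x in Ioi x0, gfun r x0 M x) ≤ ∫ x in Ioi x0, gfun r x0 M0 x := by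
  apply setIntegral_mono_on (gfun_integrableOn hx0 (hM0.trans hMM))
    (gfun_integrableOn hx0 hM0) measurableSet_Ioi
  intro x hx
  have hxpos : 0 < x := hx0.trans hx
  have hdiv : 1 ≤ x / x0 := (one_le_div hx0).2 (le_of_lt hx)
  unfold gfun
  apply mul_le_mul_of_nonneg_left
    (Real.rpow_le_rpow_of_exponent_le hdiv (by linarith)) (by positivity)

lemma gfun_int_tendsto (hx0 : 0 < x0) :
    Tendsto (fun M => ∫ x in Ioi x0, gfun r x0 M x) atTop (𝓝 0) := by
  have h0 : (0:ℝ) = ∫ x in Ioi x0, (0:ℝ) := by simp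
  rw [h0]
  apply tendsto_integral_filter_of_dominated_convergence (fun x => x ^ r * Real.exp (-x))
  · exact Eventually.of_forall
      (fun M => (gfun_contOn hx0 M).aestronglyMeasurable measurableSet_Ioi)
  · filter_upwards [eventually_ge_atTop (0:ℝ)] with M hM
    exact (ae_restrict_iff' measurableSet_Ioi).2
      (Eventually.of_forall (fun x hx => gfun_bound hx0 hM hx))
  · exact integrableOn_rpow_exp r x0 hx0
  · apply (ae_restrict_iff' measurableSet_Ioi).2
    apply Eventually.of_forall
    intro x hx
    have hxpos : 0 < x := hx0.trans hx
    have hdiv : 1 < x / x0 := (one_lt_div hx0).2 hx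
    have h1 : Tendsto (fun M : ℝ => (x / x0) ^ (-M)) atTop (𝓝 0) :=
      (tendsto_rpow_atBot_of_base_gt_one _ hdiv).comp tendsto_neg_atTop_atBot
    have := h1.const_mul (x ^ r * Real.exp (-x))
    rw [mul_zero] at this
    exact this.congr (fun M => by rw [gfun])
end Jsec

section Small
variable {q r b : ℝ} {φ : ℝ → ℝ} (hq : 2 < q) (hb : 0 < b)
  (hφC2 : ContDiffOn ℝ 2 φ (Ici b)) (hφnn : ∀ w ∈ Ici b, 0 ≤ φ w)
include hq in
lemma base_int_pos {u v : ℝ} (hu : 0 < u) (huv : u < v) (hv : v ≤ Real.log (q - 1)) :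
    0 < ∫ x in Ioc u v, x ^ r * afun q x := by
  have hcont : ContinuousOn (fun x : ℝ => x ^ r * afun q x) (Icc u v) := by
    apply ContinuousOn.mul _ (continuous_afun hq).continuousOn
    exact ContinuousOn.rpow_const continuousOn_id
      (fun x hx => Or.inl (ne_of_gt (lt_of_lt_of_le hu hx.1)))
  have hint : IntegrableOn (fun x : ℝ => x ^ r * afun q x) (Ioc u v) :=
    (hcont.integrableOn_Icc).mono_set Ioc_subset_Icc_self
  rw [setIntegral_pos_iff_support_of_nonneg_ae]
  · have hsupp : Ioo u v ⊆ (Function.support (fun x : ℝ => x ^ r * afun q x)) ∩ Ioc u v := by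
      intro x hx
      refine ⟨?_, hx.1, hx.2.le⟩
      have hxpos : 0 < x := hu.trans hx.1
      have hapos : 0 < afun q x := afun_pos hq (lt_of_lt_of_le hx.2 hv)
      have h1' : 0 < x ^ r := Real.rpow_pos_of_pos hxpos r
      simp only [Function.mem_support]
      exact mul_ne_zero h1'.ne' hapos.ne'
    calc (0:ENNReal) < volume (Ioo u v) := by
          rw [Real.volume_Ioo]; exact ENNReal.ofReal_pos.2 (by linarith)
      _ ≤ _ := measure_mono hsupp
  · apply (ae_restrict_iff' measurableSet_Ioc).2
    apply Eventually.of_forall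
    intro x hx
    have hxpos : 0 < x := hu.trans hx.1
    have hann : 0 ≤ afun q x := afun_nonneg hq (hx.2.trans hv)
    have h1' : 0 < x ^ r := Real.rpow_pos_of_pos hxpos r
    simp only [Pi.zero_apply]
    positivity
  · exact hint

include hq hb hφC2 hφnn

lemma exists_small_pos (hψnn : ∀ w ∈ Ici b, 0 ≤ w * deriv φ w)
    (hψmono : MonotoneOn (fun w => w * deriv φ w) (Ici b))
    (hψtop : Tendsto (fun w => w * deriv φ w) atTop atTop) :
    ∃ t : ℝ, 0 < t ∧ 0 < ∫ x in Ioi (b * t), Ffun q r φ t x := by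
  have hqpos : (0:ℝ) < q := by linarith
  set x0 := Real.log (q - 1) with hx0def
  have hx0pos : 0 < x0 := Real.log_pos (by linarith)
  set c1 := ∫ x in Ioc (x0 / 2) x0, x ^ r * afun q x with hc1def
  have hc1 : 0 < c1 := base_int_pos hq (by linarith) (by linarith) le_rfl
  -- choose M0
  obtain ⟨M0, hM0lt, hM0nn⟩ :
      ∃ M0 : ℝ, (∫ x in Ioi x0, gfun r x0 M0 x) < c1 / q ∧ 0 ≤ M0 := by
    have h1 := (gfun_int_tendsto (r := r) hx0pos).eventually
      (eventually_lt_nhds (div_pos hc1 hqpos))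
    exact (h1.and (eventually_ge_atTop 0)).exists
  -- choose w0
  obtain ⟨w0, hw0⟩ := eventually_atTop.1 (hψtop.eventually_ge_atTop M0)
  set w1 := max w0 b with hw1def
  have hw1pos : 0 < w1 := lt_of_lt_of_le hb (le_max_right _ _)
  set t := min (x0 / (2 * b)) (x0 / w1) with htdef
  have ht : 0 < t := lt_min (by positivity) (by positivity)
  refine ⟨t, ht, ?_⟩
  have hbt : 0 < b * t := mul_pos hb ht
  have hbt2 : b * t ≤ x0 / 2 := by
    have h := min_le_left (x0 / (2 * b)) (x0 / w1)
    rw [le_div_iff₀ (by positivity : (0:ℝ) < 2 * b)] at h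
    linarith [h]
  have hbtx0 : b * t ≤ x0 := by linarith
  have hw1t : w1 ≤ x0 / t := by
    have h := min_le_right (x0 / (2 * b)) (x0 / w1)
    rw [le_div_iff₀ hw1pos] at h
    rw [le_div_iff₀ ht]
    linarith [h]
  have hbx0t : b ≤ x0 / t := le_trans (le_max_right w0 b) hw1t
  set M := x0 / t * deriv φ (x0 / t) with hMdef
  have hM0M : M0 ≤ M := hw0 _ (le_trans (le_max_left w0 b) hw1t)
  have hMnn : 0 ≤ M := hM0nn.trans hM0M
  set E := Real.exp (-(φ (x0 / t))) with hEdef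
  have hE : 0 < E := Real.exp_pos _
  -- key pointwise weight bounds
  have hwt_le : ∀ x ∈ Ioc (x0 / 2) x0, E ≤ Real.exp (-(φ (x / t))) := by
    intro x hx
    have hxt : b ≤ x / t := by
      rw [le_div_iff₀ ht]
      have := hx.1
      nlinarith [hbt2]
    have hxtle : x / t ≤ x0 / t := by gcongr; exact hx.2
    have := phi_mono hb hφC2 hψnn (mem_Ici.2 hxt) (mem_Ici.2 hbx0t) hxtle
    exact Real.exp_le_exp.2 (by linarith)
  have hwt_tail : ∀ x ∈ Ioi x0, Real.exp (-(φ (x / t))) ≤ E * (x / x0) ^ (-M) := by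
    intro x hx
    have hxpos : 0 < x := hx0pos.trans hx
    have hlog := phi_log_lower hb hφC2 hψmono ht hbtx0 hx0pos (le_of_lt hx)
    have hrpow : (x / x0) ^ (-M) = Real.exp (-(M * (Real.log x - Real.log x0))) := by
      rw [Real.rpow_def_of_pos (by positivity), Real.log_div hxpos.ne' hx0pos.ne']
      ring_nf
    rw [hrpow, hEdef, ← Real.exp_add]
    apply Real.exp_le_exp.2
    rw [hMdef] at *
    linarith [hlog]
  -- split the integral
  have hintF : IntegrableOn (Ffun q r φ t) (Ioi (b * t)) :=
    Ffun_integrableOn hq hb hφC2 hφnn ht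
  have hsplit1 : (∫ x in Ioi (b * t), Ffun q r φ t x)
      = (∫ x in Ioc (b * t) x0, Ffun q r φ t x) + ∫ x in Ioi x0, Ffun q r φ t x := by
    rw [← setIntegral_union (Ioc_disjoint_Ioi le_rfl) measurableSet_Ioi
      (hintF.mono_set Ioc_subset_Ioi_self)
      (hintF.mono_set (Ioi_subset_Ioi (by linarith)))]
    rw [Ioc_union_Ioi_eq_Ioi (by linarith)]
  have hsplit2 : (∫ x in Ioc (b * t) x0, Ffun q r φ t x)
      = (∫ x in Ioc (b * t) (x0 / 2), Ffun q r φ t x)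
        + ∫ x in Ioc (x0 / 2) x0, Ffun q r φ t x := by
    rw [← setIntegral_union (Ioc_disjoint_Ioc_of_le le_rfl) measurableSet_Ioc
      (hintF.mono_set (Ioc_subset_Ioi_self.trans (Ioi_subset_Ioi le_rfl)))
      (hintF.mono_set (fun x hx => lt_of_le_of_lt hbt2 hx.1))]
    rw [Ioc_union_Ioc_eq_Ioc hbt2 (by linarith)]
  -- lower bound the three pieces
  have hA0 : 0 ≤ ∫ x in Ioc (b * t) (x0 / 2), Ffun q r φ t x := by
    apply setIntegral_nonneg measurableSet_Ioc
    intro x hx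
    have hxpos : 0 < x := hbt.trans hx.1
    have hann : 0 ≤ afun q x := afun_nonneg hq (by linarith [hx.2])
    have h1' : 0 < x ^ r := Real.rpow_pos_of_pos hxpos r
    have h2' := Real.exp_pos (-(φ (x / t)))
    simp only [Ffun]
    positivity
  have hA : E * c1 ≤ ∫ x in Ioc (x0 / 2) x0, Ffun q r φ t x := by
    have hbase : IntegrableOn (fun x : ℝ => x ^ r * afun q x) (Ioc (x0 / 2) x0) := by
      have hcont : ContinuousOn (fun x : ℝ => x ^ r * afun q x) (Icc (x0 / 2) x0) := by
        apply ContinuousOn.mul _ (continuous_afun hq).continuousOn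
        exact ContinuousOn.rpow_const continuousOn_id
          (fun x hx => Or.inl (ne_of_gt (lt_of_lt_of_le (by linarith) hx.1)))
      exact hcont.integrableOn_Icc.mono_set Ioc_subset_Icc_self
    have := setIntegral_mono_on (hbase.const_mul E)
      (hintF.mono_set (fun x hx => lt_of_le_of_lt hbt2 hx.1)) measurableSet_Ioc
      (fun x hx => ?_)
    · rw [integral_const_mul] at this
      exact this
    · have hxpos : 0 < x := by have := hx.1; linarith
      have hann : 0 ≤ afun q x := afun_nonneg hq hx.2
      have h1' : 0 ≤ x ^ r := (Real.rpow_pos_of_pos hxpos r).le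
      have hle := hwt_le x hx
      calc E * (x ^ r * afun q x) ≤ Real.exp (-(φ (x / t))) * (x ^ r * afun q x) :=
            mul_le_mul_of_nonneg_right hle (by positivity)
        _ = Ffun q r φ t x := by rw [Ffun]; ring
  have hB : -(E * (q * ∫ x in Ioi x0, gfun r x0 M x)) ≤ ∫ x in Ioi x0, Ffun q r φ t x := by
    have hglhs : IntegrableOn (fun x => -(E * q) * gfun r x0 M x) (Ioi x0) :=
      (gfun_integrableOn hx0pos hMnn).const_mul _
    have hmono := setIntegral_mono_on hglhs
      (hintF.mono_set (Ioi_subset_Ioi (by linarith))) measurableSet_Ioi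
      (fun x hx => ?_)
    · rw [integral_const_mul] at hmono
      calc -(E * (q * ∫ x in Ioi x0, gfun r x0 M x))
          = -(E * q) * ∫ x in Ioi x0, gfun r x0 M x := by ring
        _ ≤ _ := hmono
    · -- pointwise: -(E*q) * gfun ≤ Ffun
      have hxpos : 0 < x := hx0pos.trans hx
      have habs : |Ffun q r φ t x| ≤ E * q * gfun r x0 M x := by
        have h2 := abs_afun_le hq hxpos.le
        have htail := hwt_tail x hx
        have h1' : 0 < x ^ r := Real.rpow_pos_of_pos hxpos r
        have hrp : (0:ℝ) < (x / x0) ^ (-M) := Real.rpow_pos_of_pos (by positivity) _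
        have : |Ffun q r φ t x| = x ^ r * Real.exp (-(φ (x / t))) * |afun q x| := by
          rw [Ffun, abs_mul, abs_of_pos (by positivity : (0:ℝ) < x ^ r * Real.exp (-(φ (x / t))))]
        rw [this, gfun]
        calc x ^ r * Real.exp (-(φ (x / t))) * |afun q x|
            ≤ x ^ r * (E * (x / x0) ^ (-M)) * (q * Real.exp (-x)) := by
              apply mul_le_mul _ h2 (abs_nonneg _) (by positivity)
              exact mul_le_mul_of_nonneg_left htail h1'.le
          _ = E * q * (x ^ r * Real.exp (-x) * (x / x0) ^ (-M)) := by ring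
      have := (abs_le.1 habs).1
      calc -(E * q) * gfun r x0 M x = -(E * q * gfun r x0 M x) := by ring
        _ ≤ Ffun q r φ t x := this
  -- combine
  have hJle : (∫ x in Ioi x0, gfun r x0 M x) ≤ ∫ x in Ioi x0, gfun r x0 M0 x :=
    gfun_int_mono hx0pos hM0nn hM0M
  have hfinal : E * c1 - E * (q * ∫ x in Ioi x0, gfun r x0 M0 x)
      ≤ ∫ x in Ioi (b * t), Ffun q r φ t x := by
    rw [hsplit1, hsplit2]
    have : E * (q * ∫ x in Ioi x0, gfun r x0 M x)
        ≤ E * (q * ∫ x in Ioi x0, gfun r x0 M0 x) := by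
      apply mul_le_mul_of_nonneg_left _ hE.le
      exact mul_le_mul_of_nonneg_left hJle hqpos.le
    linarith
  have : 0 < E * c1 - E * (q * ∫ x in Ioi x0, gfun r x0 M0 x) := by
    have h1 : q * (∫ x in Ioi x0, gfun r x0 M0 x) < c1 := by
      rw [← lt_div_iff₀' hqpos]
      exact hM0lt
    nlinarith
  linarith



end Small

lemma Phi_contAt {q r b : ℝ} {φ : ℝ → ℝ} (hq : 2 < q) (hb : 0 < b)
    (hφC2 : ContDiffOn ℝ 2 φ (Ici b)) (hφnn : ∀ w ∈ Ici b, 0 ≤ φ w)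
    {t0 : ℝ} (ht0 : 0 < t0) :
    ContinuousAt (fun t => ∫ x in Ioi (b * t), Ffun q r φ t x) t0 := by
  have hc0 : 0 < b * t0 / 2 := by positivity
  have hrestrict : ∀ t : ℝ, t0 / 2 < t →
      (volume.restrict (Ioi (b * t0 / 2))).restrict (Ioi (b * t))
        = volume.restrict (Ioi (b * t)) := by
    intro t ht
    rw [Measure.restrict_restrict measurableSet_Ioi]
    congr 1
    apply inter_eq_left.2 (Ioi_subset_Ioi _)
    nlinarith
  have hkey : ∀ t : ℝ, t0 / 2 < t →
      (∫ x in Ioi (b * t), Ffun q r φ t x)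
        = ∫ x, (Ioi (b * t)).indicator (Ffun q r φ t) x ∂(volume.restrict (Ioi (b * t0 / 2))) := by
    intro t ht
    rw [integral_indicator measurableSet_Ioi, hrestrict t ht]
  have hmem_half : Ioi (t0 / 2) ∈ 𝓝 t0 := Ioi_mem_nhds (by linarith)
  have hmeas : ∀ᶠ t in 𝓝 t0, AEStronglyMeasurable
      (fun x => (Ioi (b * t)).indicator (Ffun q r φ t) x) (volume.restrict (Ioi (b * t0 / 2))) := by
    filter_upwards [hmem_half] with t ht
    have ht' : 0 < t := lt_trans (by linarith) ht
    apply (aestronglyMeasurable_indicator_iff measurableSet_Ioi).2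
    rw [hrestrict t ht]
    exact (Ffun_contOn hq hb hφC2 ht').aestronglyMeasurable measurableSet_Ioi
  have hbnd : ∀ᶠ t in 𝓝 t0, ∀ᵐ x ∂(volume.restrict (Ioi (b * t0 / 2))),
      ‖(Ioi (b * t)).indicator (Ffun q r φ t) x‖ ≤ q * (x ^ r * Real.exp (-x)) := by
    filter_upwards [hmem_half] with t ht
    have ht' : 0 < t := lt_trans (by linarith) ht
    apply (ae_restrict_iff' measurableSet_Ioi).2
    apply Eventually.of_forall
    intro x hx
    have hxpos : 0 < x := hc0.trans hx
    by_cases hxt : x ∈ Ioi (b * t)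
    · rw [indicator_of_mem hxt]
      exact Ffun_bound hq hb hφC2 hφnn ht' hxt
    · rw [indicator_of_notMem hxt, norm_zero]
      have hq0 : (0:ℝ) < q := by linarith
      positivity
  have hbound_int : Integrable (fun x => q * (x ^ r * Real.exp (-x)))
      (volume.restrict (Ioi (b * t0 / 2))) :=
    ((integrableOn_rpow_exp r (b * t0 / 2) hc0).const_mul q)
  have hlim : ∀ᵐ x ∂(volume.restrict (Ioi (b * t0 / 2))),
      Tendsto (fun t => (Ioi (b * t)).indicator (Ffun q r φ t) x) (𝓝 t0)
        (𝓝 ((Ioi (b * t0)).indicator (Ffun q r φ t0) x)) := by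
    have hne : ∀ᵐ x : ℝ, x ≠ b * t0 := by
      refine ae_iff.2 ?_
      simp only [ne_eq, not_not, Set.setOf_eq_eq_singleton]
      exact Real.volume_singleton
    filter_upwards [ae_restrict_of_ae hne, ae_restrict_mem measurableSet_Ioi] with x hxne hxmem
    rcases lt_or_gt_of_ne hxne with hlt | hgt
    · have hG0 : (Ioi (b * t0)).indicator (Ffun q r φ t0) x = 0 := by
        apply indicator_of_notMem
        simp only [mem_Ioi, not_lt]
        exact hlt.le
      rw [hG0]
      have hev : ∀ᶠ t in 𝓝 t0, (0:ℝ) = (Ioi (b * t)).indicator (Ffun q r φ t) x := by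
        filter_upwards [Ioi_mem_nhds ((div_lt_iff₀' hb).2 hlt)] with t ht
        rw [indicator_of_notMem]
        simp only [mem_Ioi, not_lt]
        exact le_of_lt ((div_lt_iff₀' hb).1 ht)
      exact Tendsto.congr' hev tendsto_const_nhds
    · have hxpos : 0 < x := hc0.trans hxmem
      have hbx : t0 < x / b := (lt_div_iff₀' hb).2 hgt
      have hev : ∀ᶠ t in 𝓝 t0, Ffun q r φ t x = (Ioi (b * t)).indicator (Ffun q r φ t) x := by
        filter_upwards [Iio_mem_nhds hbx] with t ht
        exact (indicator_of_mem ((lt_div_iff₀' hb).1 ht) _).symm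
      have hG0 : (Ioi (b * t0)).indicator (Ffun q r φ t0) x = Ffun q r φ t0 x :=
        indicator_of_mem hgt _
      rw [hG0]
      have hcont : ContinuousAt (fun t => Ffun q r φ t x) t0 := by
        have hxt0 : b < x / t0 := (lt_div_iff₀ ht0).2 hgt
        have h1 : ContinuousAt (fun t => x / t) t0 :=
          ContinuousAt.div continuousAt_const continuousAt_id ht0.ne'
        have h2 : ContinuousAt φ (x / t0) :=
          hφC2.continuousOn.continuousAt (Ici_mem_nhds hxt0)
        have h3 : ContinuousAt (fun t => Real.exp (-(φ (x / t)))) t0 :=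
          (Real.continuous_exp.continuousAt).comp ((h2.comp h1).neg)
        exact (continuousAt_const.mul h3).mul continuousAt_const
      exact hcont.tendsto.congr' hev
  have hDCT := tendsto_integral_filter_of_dominated_convergence
    (μ := volume.restrict (Ioi (b * t0 / 2)))
    (F := fun t x => (Ioi (b * t)).indicator (Ffun q r φ t) x)
    (f := fun x => (Ioi (b * t0)).indicator (Ffun q r φ t0) x)
    (fun x => q * (x ^ r * Real.exp (-x))) hmeas hbnd hbound_int hlim
  apply Tendsto.congr' (eventually_of_mem hmem_half (fun t ht => (hkey t ht).symm))
  rw [← hkey t0 (by linarith)] at hDCT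
  exact hDCT

/-- **Unique zero of `Φ`, case `0 < b < c = ∞`.** -/
theorem unique_zero_crossing_halfline
    (q : ℝ) (hq : 2 < q) (r : ℝ) (b : ℝ) (hb : 0 < b)
    (φ : ℝ → ℝ) (hφC2 : ContDiffOn ℝ 2 φ (Ici b))
    (hφnn : ∀ w ∈ Ici b, 0 ≤ φ w)
    (hψnn : ∀ w ∈ Ici b, 0 ≤ w * deriv φ w)
    (hψmono : MonotoneOn (fun w => w * deriv φ w) (Ici b))
    (hψtop : Tendsto (fun w => w * deriv φ w) atTop atTop) :
    ∃! t : ℝ, 0 < t ∧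
      (∫ x in Ioi (b * t), x ^ r * Real.exp (-(φ (x / t))) * afun q x) = 0 := by
  have hgoal : ∀ t : ℝ, (∫ x in Ioi (b * t), x ^ r * Real.exp (-(φ (x / t))) * afun q x)
      = ∫ x in Ioi (b * t), Ffun q r φ t x := fun t => rfl
  obtain ⟨ta, htapos, htaPos⟩ := exists_small_pos hq hb hφC2 hφnn hψnn hψmono hψtop
  set x0 := Real.log (q - 1) with hx0def
  set tb := max ((x0 + 1) / b) (ta + 1) with htbdef
  have htb_gt : ta < tb := lt_of_lt_of_le (lt_add_one ta) (le_max_right _ _)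
  have htbpos : 0 < tb := htapos.trans htb_gt
  have hx0tb : x0 ≤ b * tb := by
    have h := le_max_left ((x0 + 1) / b) (ta + 1)
    rw [div_le_iff₀ hb] at h
    nlinarith
  have htbneg : (∫ x in Ioi (b * tb), Ffun q r φ tb x) < 0 :=
    Ffun_int_neg hq hb hφC2 hφnn htbpos hx0tb
  have hcont : ContinuousOn (fun t => ∫ x in Ioi (b * t), Ffun q r φ t x) (Icc ta tb) :=
    fun t ht => (Phi_contAt hq hb hφC2 hφnn (lt_of_lt_of_le htapos ht.1)).continuousWithinAt
  have hIVT := intermediate_value_Icc' htb_gt.le hcont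
  have h0mem : (0:ℝ) ∈ Icc (∫ x in Ioi (b * tb), Ffun q r φ tb x)
      (∫ x in Ioi (b * ta), Ffun q r φ ta x) := ⟨htbneg.le, htaPos.le⟩
  obtain ⟨t1, ht1mem, ht1zero⟩ := hIVT h0mem
  have ht1pos : 0 < t1 := lt_of_lt_of_le htapos ht1mem.1
  refine ⟨t1, ⟨ht1pos, ?_⟩, ?_⟩
  · rw [hgoal]; exact ht1zero
  · rintro y ⟨hypos, hyzero⟩
    rw [hgoal] at hyzero
    by_contra hne
    rcases lt_or_gt_of_ne hne with hlt | hgt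
    · have := crossing hq hb hφC2 hφnn hψmono hypos hlt (le_of_eq hyzero)
      linarith [ht1zero, this]
    · have := crossing hq hb hφC2 hφnn hψmono ht1pos hgt (le_of_eq ht1zero)
      linarith [hyzero, this]
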